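/- arXiv:0812.2602 — 2 statements merged into one kernel-verified Lean document; each statement's English description precedes it below -/
import Mathlib

section
/- Let D be a dictionary of N unit vectors in ℂ^p with N > p. Then the coherence of D satisfies max_{φ≠ψ} |⟨φ,ψ⟩|² ≥ (N−p)/(p(N−1)); in particular, if D is μ-coherent (|⟨φ,ψ⟩| ≤ μ/√p for distinct atoms), then μ² ≥ (N−p)/(N−1). -/
open Matrix in
lemma trace_mul_conjTranspose_eq {n m : Type*} [Fintype n] [Fintype m]
    (A : Matrix n m ℂ) :
    (A * Aᴴ).trace = ∑ i, ∑ j, (‖A i j‖ ^ 2 : ℂ) := by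
  simp [Matrix.trace, Matrix.diag, Matrix.mul_apply, Matrix.conjTranspose_apply,
    Complex.mul_conj, Complex.normSq_eq_norm_sq]

open Matrix in
/-- Welch bound: `N` unit vectors in `ℂ^p` with `N > p` have coherence at least
`√((N−p)/(p(N−1)))`; in particular a μ-coherent dictionary has `μ² ≥ (N−p)/(N−1)`. -/
theorem welch_bound
    {p N : ℕ} (hp : 0 < p) (hN : p < N) {ι : Type*} [Fintype ι]
    (hcard : Fintype.card ι = N)
    (D : ι → EuclideanSpace ℂ (Fin p)) (hD : ∀ i, ‖D i‖ = 1) :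
    (∃ i j, i ≠ j ∧ ((N : ℝ) - p) / (p * ((N : ℝ) - 1)) ≤ ‖(inner ℂ (D i) (D j) : ℂ)‖ ^ 2) ∧
    ∀ μ : ℝ, (∀ i j, i ≠ j → ‖(inner ℂ (D i) (D j) : ℂ)‖ ≤ μ / Real.sqrt p) →
      ((N : ℝ) - p) / ((N : ℝ) - 1) ≤ μ ^ 2 := by
  classical
  haveI hι : Nonempty ι := by
    rw [← Fintype.card_pos_iff, hcard]; omega
  have hp' : (0:ℝ) < p := by exact_mod_cast hp
  have hN1 : (1:ℝ) < N := by exact_mod_cast (by omega : 1 < N)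
  have hpne : (p:ℝ) ≠ 0 := by positivity
  have hNne : (N:ℝ) - 1 ≠ 0 := by
    have : (1:ℝ) < N := by exact_mod_cast (by omega : 1 < N)
    linarith
  set c : ℝ := ((N : ℝ) - p) / (p * ((N : ℝ) - 1)) with hc
  set M : Matrix (Fin p) ι ℂ := Matrix.of fun a i => D i a with hM
  set G : Matrix ι ι ℂ := Mᴴ * M with hGdef
  set S : Matrix (Fin p) (Fin p) ℂ := M * Mᴴ with hSdef
  have hG : ∀ i j, G i j = (inner ℂ (D i) (D j) : ℂ) := by
    intro i j
    simp [hGdef, Matrix.mul_apply, Matrix.conjTranspose_apply, hM,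
      PiLp.inner_apply, RCLike.inner_apply, mul_comm]
  -- trace identity
  have htr : ∑ i, ∑ j, (‖G i j‖ ^ 2 : ℂ) = ∑ a, ∑ b, (‖S a b‖ ^ 2 : ℂ) := by
    have hGH : Gᴴ = G := by
      simp [hGdef, Matrix.conjTranspose_mul, Matrix.mul_assoc]
    have hSH : Sᴴ = S := by
      simp [hSdef, Matrix.conjTranspose_mul, Matrix.mul_assoc]
    calc ∑ i, ∑ j, (‖G i j‖ ^ 2 : ℂ) = (G * Gᴴ).trace :=
          (trace_mul_conjTranspose_eq G).symm
      _ = (S * Sᴴ).trace := by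
          rw [hGH, hSH, hGdef, hSdef,
            Matrix.mul_assoc Mᴴ M (Mᴴ * M), Matrix.trace_mul_comm,
            ← Matrix.mul_assoc M Mᴴ M, ← Matrix.mul_assoc, Matrix.mul_assoc (M * Mᴴ)]
      _ = ∑ a, ∑ b, (‖S a b‖ ^ 2 : ℂ) := trace_mul_conjTranspose_eq S
  have hreal : ∑ i, ∑ j, ‖G i j‖ ^ 2 = ∑ a, ∑ b, ‖S a b‖ ^ 2 := by
    exact_mod_cast htr
  -- diagonal bound for S
  have hSd : ∀ a, ((S a a).re) ^ 2 ≤ ∑ b, ‖S a b‖ ^ 2 := by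
    intro a
    have h1 : ((S a a).re) ^ 2 ≤ ‖S a a‖ ^ 2 := by
      rw [← sq_abs ((S a a).re)]
      apply pow_le_pow_left₀ (abs_nonneg _)
      exact Complex.abs_re_le_norm _
    exact h1.trans (Finset.single_le_sum (f := fun b => ‖S a b‖ ^ 2)
      (fun b _ => by positivity) (Finset.mem_univ a))
  -- trace of S
  have hnorm : ∀ i, ∑ a, ‖D i a‖ ^ 2 = 1 := by
    intro i
    have h := hD i
    rw [EuclideanSpace.norm_eq, Real.sqrt_eq_one] at h
    exact h
  have hStr : ∑ a, (S a a).re = (N : ℝ) := by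
    have h1 : ∀ a, (S a a).re = ∑ i, ‖D i a‖ ^ 2 := by
      intro a
      simp [hSdef, Matrix.mul_apply, Matrix.conjTranspose_apply, hM, Complex.mul_conj,
        Complex.re_sum, Complex.normSq_eq_norm_sq, ← Complex.ofReal_pow, Complex.ofReal_re]
    rw [Finset.sum_congr rfl fun a _ => h1 a, Finset.sum_comm]
    simp [hnorm, hcard]
  -- Cauchy-Schwarz
  have hCS : (N : ℝ) ^ 2 ≤ (p : ℝ) * ∑ a, ((S a a).re) ^ 2 := by
    have h := sq_sum_le_card_mul_sum_sq (s := (Finset.univ : Finset (Fin p)))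
      (f := fun a => (S a a).re)
    simpa [hStr] using h
  have hkey : (N : ℝ) ^ 2 / p ≤ ∑ i, ∑ j, ‖G i j‖ ^ 2 := by
    rw [div_le_iff₀ hp', hreal]
    calc (N:ℝ)^2 ≤ (p:ℝ) * ∑ a, ((S a a).re) ^ 2 := hCS
      _ ≤ (p:ℝ) * ∑ a, ∑ b, ‖S a b‖ ^ 2 := by
          apply mul_le_mul_of_nonneg_left (Finset.sum_le_sum fun a _ => hSd a) hp'.le
      _ = (∑ a, ∑ b, ‖S a b‖ ^ 2) * p := mul_comm _ _
  -- split off diagonal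
  have hGd : ∀ i, ‖G i i‖ ^ 2 = 1 := by
    intro i
    rw [hG, inner_self_eq_norm_sq_to_K]
    simp [hD]
  have hsplit : ∑ i, ∑ j, ‖G i j‖ ^ 2
      = (N : ℝ) + ∑ i, ∑ j ∈ Finset.univ.erase i, ‖G i j‖ ^ 2 := by
    have : ∀ i : ι, ∑ j, ‖G i j‖ ^ 2 = ‖G i i‖ ^ 2 + ∑ j ∈ Finset.univ.erase i, ‖G i j‖ ^ 2 :=
      fun i => (Finset.add_sum_erase _ _ (Finset.mem_univ i)).symm
    rw [Finset.sum_congr rfl fun i _ => this i, Finset.sum_add_distrib]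
    congr 1
    simp [hGd, hcard]
  have hoff : ∑ i : ι, ∑ _j ∈ Finset.univ.erase i, c ≤ ∑ i, ∑ j ∈ Finset.univ.erase i, ‖G i j‖ ^ 2 := by
    have hcarde : ∀ i : ι, (Finset.univ.erase i).card = N - 1 := by
      intro i; rw [Finset.card_erase_of_mem (Finset.mem_univ i), Finset.card_univ, hcard]
    have hL : ∑ i : ι, ∑ _j ∈ Finset.univ.erase i, c = (N:ℝ) * (((N:ℝ) - 1) * c) := by
      simp only [Finset.sum_const, hcarde, nsmul_eq_mul]
      rw [Finset.card_univ, hcard]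
      have : ((N - 1 : ℕ) : ℝ) = (N:ℝ) - 1 := by
        push_cast [Nat.cast_sub (by omega : 1 ≤ N)]; ring
      rw [this]
    rw [hL]
    have hval : (N:ℝ) * (((N:ℝ) - 1) * c) = (N:ℝ)^2 / p - N := by
      rw [hc]; field_simp
    rw [hval]
    have := hkey
    rw [hsplit] at this
    linarith
  obtain ⟨i, -, hi⟩ := Finset.exists_le_of_sum_le Finset.univ_nonempty hoff
  have herasene : (Finset.univ.erase i).Nonempty := by
    rw [← Finset.card_pos, Finset.card_erase_of_mem (Finset.mem_univ i), Finset.card_univ, hcard]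
    omega
  obtain ⟨j, hj, hji⟩ := Finset.exists_le_of_sum_le herasene hi
  have hij : i ≠ j := fun h => (Finset.mem_erase.mp hj).1 h.symm
  have hmain : ∃ i j, i ≠ j ∧ c ≤ ‖(inner ℂ (D i) (D j) : ℂ)‖ ^ 2 := by
    exact ⟨i, j, hij, by rwa [← hG]⟩
  refine ⟨hmain, ?_⟩
  intro μ hμ
  obtain ⟨i', j', hij', hle⟩ := hmain
  have h1 := hμ i' j' hij'
  have h2 : c ≤ (μ / Real.sqrt p) ^ 2 :=
    hle.trans (pow_le_pow_left₀ (norm_nonneg _) h1 2)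
  have h3 : (μ / Real.sqrt p) ^ 2 = μ ^ 2 / p := by
    rw [div_pow, Real.sq_sqrt hp'.le]
  rw [h3] at h2
  have h4 : ((N : ℝ) - p) / ((N : ℝ) - 1) = (p : ℝ) * c := by
    rw [hc]; field_simp
  rw [h4]
  calc (p:ℝ) * c ≤ (p:ℝ) * (μ^2 / p) := by
        apply mul_le_mul_of_nonneg_left h2 hp'.le
    _ = μ ^ 2 := by field_simp
end

section
/- Let D ⊆ ℂ^p be a μ-coherent dictionary and suppose f ∈ ℂ(D) is supported on a set S with |S| = n, where (2n−1)·μ/√p < 1. If Θ(f) = Θ(g) for another function g supported on a set of size at most n, then f = g. (Uniqueness of n-sparse representations under the coherence condition.) -/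
/-- Uniqueness of sparse representations in a μ-coherent dictionary: if
`(2n−1)μ/√p < 1` and `f`, `g` are supported on sets of size `n` and at most `n`
respectively with `Θ f = Θ g`, then `f = g`. -/
theorem sparse_representation_unique
    {p n : ℕ} (hp : 0 < p) {ι : Type*} [Fintype ι] [DecidableEq ι]
    (D : ι → EuclideanSpace ℂ (Fin p)) (hD : ∀ i, ‖D i‖ = 1)
    (μ : ℝ) (hμ : ∀ i j, i ≠ j → ‖(inner ℂ (D i) (D j) : ℂ)‖ ≤ μ / Real.sqrt p)
    (hsmall : (2 * (n : ℝ) - 1) * μ / Real.sqrt p < 1)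
    (f g : ι → ℂ) (S T : Finset ι)
    (hSn : S.card = n) (hTn : T.card ≤ n)
    (hfS : ∀ i ∉ S, f i = 0) (hgT : ∀ i ∉ T, g i = 0)
    (hΘ : ∑ i, f i • D i = ∑ i, g i • D i) :
    f = g := by
  set h : ι → ℂ := fun i => f i - g i with hhdef
  have hzero : ∀ i, h i = 0 := by
    by_contra hcon
    push_neg at hcon
    obtain ⟨i0, hi0⟩ := hcon
    set U : Finset ι := S ∪ T with hUdef
    have hUcard : U.card ≤ 2 * n := by
      have := Finset.card_union_le S T
      simp only [hUdef]
      omega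
    have hUsupp : ∀ i ∉ U, h i = 0 := by
      intro i hi
      have h1 : i ∉ S := fun hS => hi (Finset.mem_union_left _ hS)
      have h2 : i ∉ T := fun hT => hi (Finset.mem_union_right _ hT)
      simp [hhdef, hfS i h1, hgT i h2]
    have hi0U : i0 ∈ U := by
      by_contra hc; exact hi0 (hUsupp i0 hc)
    obtain ⟨j, hjU, hjmax⟩ := Finset.exists_max_image U (fun i => ‖h i‖) ⟨i0, hi0U⟩
    have hjpos : 0 < ‖h j‖ := lt_of_lt_of_le (norm_pos_iff.mpr hi0) (hjmax i0 hi0U)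
    have hsum : ∑ i, h i • D i = 0 := by
      simp only [hhdef, sub_smul, Finset.sum_sub_distrib, hΘ, sub_self]
    have hinner : ∑ i, h i * inner ℂ (D j) (D i) = 0 := by
      have := congrArg (fun v => (inner ℂ (D j) v : ℂ)) hsum
      simpa [inner_sum, inner_smul_right, mul_comm] using this
    have hjj : (inner ℂ (D j) (D j) : ℂ) = 1 := by
      rw [inner_self_eq_norm_sq_to_K, hD j]; norm_num
    rw [← Finset.add_sum_erase _ _ (Finset.mem_univ j), hjj, mul_one] at hinner
    have heq : h j = -∑ i ∈ Finset.univ.erase j, h i * inner ℂ (D j) (D i) :=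
      eq_neg_of_add_eq_zero_left hinner
    have hrestrict : ∑ i ∈ Finset.univ.erase j, h i * inner ℂ (D j) (D i)
        = ∑ i ∈ U.erase j, h i * inner ℂ (D j) (D i) := by
      refine (Finset.sum_subset ?_ ?_).symm
      · intro x hx
        exact Finset.mem_erase.mpr ⟨(Finset.mem_erase.mp hx).1, Finset.mem_univ x⟩
      · intro x hx hxU
        have hx0 : h x = 0 := by
          apply hUsupp
          intro hxU'
          exact hxU (Finset.mem_erase.mpr ⟨(Finset.mem_erase.mp hx).1, hxU'⟩)
        simp [hx0]
    have hbound : ‖h j‖ ≤ (U.erase j).card * (μ / Real.sqrt p * ‖h j‖) := by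
      calc ‖h j‖ = ‖∑ i ∈ U.erase j, h i * inner ℂ (D j) (D i)‖ := by
            rw [heq, hrestrict, norm_neg]
        _ ≤ ∑ i ∈ U.erase j, ‖h i * inner ℂ (D j) (D i)‖ := norm_sum_le _ _
        _ ≤ ∑ _i ∈ U.erase j, μ / Real.sqrt p * ‖h j‖ := by
            apply Finset.sum_le_sum
            intro i hi
            rw [norm_mul]
            have hiU := Finset.mem_of_mem_erase hi
            have hij : i ≠ j := (Finset.mem_erase.mp hi).1
            calc ‖h i‖ * ‖(inner ℂ (D j) (D i) : ℂ)‖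
                ≤ ‖h j‖ * (μ / Real.sqrt p) :=
                  mul_le_mul (hjmax i hiU) (hμ j i hij.symm) (norm_nonneg _) (norm_nonneg _)
              _ = μ / Real.sqrt p * ‖h j‖ := mul_comm _ _
        _ = (U.erase j).card * (μ / Real.sqrt p * ‖h j‖) := by
            rw [Finset.sum_const, nsmul_eq_mul]
    by_cases hne : (U.erase j).Nonempty
    · obtain ⟨i, hi⟩ := hne
      have hμnn : 0 ≤ μ / Real.sqrt p :=
        le_trans (norm_nonneg _) (hμ j i ((Finset.mem_erase.mp hi).1).symm)
      have hcard : ((U.erase j).card : ℝ) ≤ 2 * n - 1 := by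
        have h1 : 1 ≤ U.card := Finset.card_pos.mpr ⟨j, hjU⟩
        have h3 : (U.erase j).card = U.card - 1 := Finset.card_erase_of_mem hjU
        have h4 : (U.erase j).card + 1 ≤ 2 * n := by omega
        have := (Nat.cast_le (α := ℝ)).mpr h4
        push_cast at this
        linarith
      have hmain : ‖h j‖ ≤ (2 * (n:ℝ) - 1) * (μ / Real.sqrt p) * ‖h j‖ := by
        calc ‖h j‖ ≤ (U.erase j).card * (μ / Real.sqrt p * ‖h j‖) := hbound
          _ ≤ (2 * (n:ℝ) - 1) * (μ / Real.sqrt p * ‖h j‖) :=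
              mul_le_mul_of_nonneg_right hcard (mul_nonneg hμnn (norm_nonneg _))
          _ = (2 * (n:ℝ) - 1) * (μ / Real.sqrt p) * ‖h j‖ := by ring
      have hlt : (2 * (n:ℝ) - 1) * (μ / Real.sqrt p) * ‖h j‖ < 1 * ‖h j‖ := by
        apply mul_lt_mul_of_pos_right _ hjpos
        have : (2 * (n:ℝ) - 1) * (μ / Real.sqrt p) = (2 * (n:ℝ) - 1) * μ / Real.sqrt p := by
          ring
        rw [this]; exact hsmall
      rw [one_mul] at hlt
      linarith
    · rw [Finset.not_nonempty_iff_eq_empty] at hne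
      rw [hne] at hbound
      simp only [Finset.card_empty, Nat.cast_zero, zero_mul] at hbound
      linarith
  funext i
  have := hzero i
  simpa [hhdef, sub_eq_zero] using this
end
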